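/- Let α be a positive integer, Ω a nonempty finite set, and let μ assign to each subset S of {1,…,α} a probability mass function μ_S on Ω, satisfying the cut-and-paste property: h(μ_{S∪T}, μ_∅) = h(μ_S, μ_T) for all pairwise disjoint subsets S, T of {1,…,α}. Let k ≥ 1 be an integer and let S_1, …, S_m be pairwise disjoint subsets of {1,…,α}, each of size at most k. Then Σ_{i=1}^{α} h²(μ_∅, μ_{{i}}) ≥ (1/(2k)) · Σ_{j=1}^{m} h²(μ_∅, μ_{S_j}). -/

import Mathlib

/-- The squared Hellinger distance between two probability mass functions on a
finite set: `h²(p,q) = (1/2)·Σ_ω (√(p ω) − √(q ω))²`. -/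
noncomputable def hellingerSq {Ω : Type*} [Fintype Ω] (p q : Ω → ℝ) : ℝ :=
  (1 / 2) * ∑ ω, (Real.sqrt (p ω) - Real.sqrt (q ω)) ^ 2

/-- The Hellinger distance `h(p,q) = √(h²(p,q))`. -/
noncomputable def hellinger {Ω : Type*} [Fintype Ω] (p q : Ω → ℝ) : ℝ :=
  Real.sqrt (hellingerSq p q)

lemma hellingerSq_nonneg {Ω : Type*} [Fintype Ω] (p q : Ω → ℝ) :
    0 ≤ hellingerSq p q := by
  unfold hellingerSq
  positivity

lemma hellinger_nonneg {Ω : Type*} [Fintype Ω] (p q : Ω → ℝ) :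
    0 ≤ hellinger p q := Real.sqrt_nonneg _

lemma sq_hellinger {Ω : Type*} [Fintype Ω] (p q : Ω → ℝ) :
    hellinger p q ^ 2 = hellingerSq p q :=
  Real.sq_sqrt (hellingerSq_nonneg p q)

lemma hellingerSq_comm {Ω : Type*} [Fintype Ω] (p q : Ω → ℝ) :
    hellingerSq p q = hellingerSq q p := by
  unfold hellingerSq
  congr 1
  refine Finset.sum_congr rfl fun ω _ => ?_
  rw [← neg_sub, neg_sq]

lemma hellinger_comm {Ω : Type*} [Fintype Ω] (p q : Ω → ℝ) :
    hellinger p q = hellinger q p := by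
  unfold hellinger; rw [hellingerSq_comm]

lemma hellingerSq_self {Ω : Type*} [Fintype Ω] (p : Ω → ℝ) :
    hellingerSq p p = 0 := by
  simp [hellingerSq]

lemma hellinger_eq_norm {Ω : Type*} [Fintype Ω] (p q : Ω → ℝ) :
    hellinger p q =
      ‖(WithLp.equiv 2 (Ω → ℝ)).symm (fun ω => Real.sqrt (p ω)) -
        (WithLp.equiv 2 (Ω → ℝ)).symm (fun ω => Real.sqrt (q ω))‖ / Real.sqrt 2 := by
  rw [EuclideanSpace.norm_eq]
  unfold hellinger hellingerSq
  have hs : (0:ℝ) ≤ ∑ ω, (Real.sqrt (p ω) - Real.sqrt (q ω)) ^ 2 :=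
    Finset.sum_nonneg fun ω _ => sq_nonneg _
  rw [one_div, inv_mul_eq_div, Real.sqrt_div hs 2]
  congr 2
  refine Finset.sum_congr rfl fun ω _ => ?_
  simp [Real.norm_eq_abs, sq_abs]

lemma hellinger_triangle {Ω : Type*} [Fintype Ω] (p q r : Ω → ℝ) :
    hellinger p r ≤ hellinger p q + hellinger q r := by
  rw [hellinger_eq_norm, hellinger_eq_norm, hellinger_eq_norm, ← add_div,
    div_le_div_iff_of_pos_right (by positivity)]
  exact norm_sub_le_norm_sub_add_norm_sub _ _ _

theorem hellinger_sum_singletons_ge {α : ℕ} (hα : 0 < α)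
    {Ω : Type*} [Fintype Ω] [Nonempty Ω]
    (μ : Finset (Fin α) → Ω → ℝ)
    (hnonneg : ∀ S ω, 0 ≤ μ S ω)
    (hsum : ∀ S, ∑ ω, μ S ω = 1)
    (hcutpaste : ∀ S T : Finset (Fin α), Disjoint S T →
      hellinger (μ (S ∪ T)) (μ ∅) = hellinger (μ S) (μ T))
    (k : ℕ) (hk : 1 ≤ k) (m : ℕ) (S : Fin m → Finset (Fin α))
    (hdisj : ∀ i j : Fin m, i ≠ j → Disjoint (S i) (S j))
    (hcard : ∀ j : Fin m, (S j).card ≤ k) :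
    (1 / (2 * (k : ℝ))) * ∑ j : Fin m, hellingerSq (μ ∅) (μ (S j)) ≤
      ∑ i : Fin α, hellingerSq (μ ∅) (μ {i}) := by
  -- subadditivity of hellinger along disjoint decomposition
  have key : ∀ T : Finset (Fin α),
      hellinger (μ ∅) (μ T) ≤ ∑ i ∈ T, hellinger (μ ∅) (μ {i}) := by
    intro T
    induction T using Finset.induction with
    | empty => simp [hellinger, hellingerSq_self]
    | @insert i s hi ih =>
      have hdisj' : Disjoint ({i} : Finset (Fin α)) s := by
        simpa using hi
      have hins : ({i} : Finset (Fin α)) ∪ s = insert i s := by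
        ext x; simp [or_comm]
      calc hellinger (μ ∅) (μ (insert i s))
          = hellinger (μ ({i} ∪ s)) (μ ∅) := by rw [hins, hellinger_comm]
        _ = hellinger (μ {i}) (μ s) := hcutpaste _ _ hdisj'
        _ ≤ hellinger (μ {i}) (μ ∅) + hellinger (μ ∅) (μ s) :=
            hellinger_triangle _ _ _
        _ ≤ hellinger (μ ∅) (μ {i}) + ∑ j ∈ s, hellinger (μ ∅) (μ {j}) := by
            rw [hellinger_comm]; exact add_le_add le_rfl ih
        _ = ∑ j ∈ insert i s, hellinger (μ ∅) (μ {j}) := by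
            rw [Finset.sum_insert hi]
  -- per-block squared bound
  have block : ∀ j : Fin m,
      hellingerSq (μ ∅) (μ (S j)) ≤ (k : ℝ) * ∑ i ∈ S j, hellingerSq (μ ∅) (μ {i}) := by
    intro j
    have h1 : hellingerSq (μ ∅) (μ (S j)) ≤ (∑ i ∈ S j, hellinger (μ ∅) (μ {i})) ^ 2 := by
      rw [← sq_hellinger]
      exact pow_le_pow_left₀ (hellinger_nonneg _ _) (key (S j)) 2
    have h2 : (∑ i ∈ S j, hellinger (μ ∅) (μ {i})) ^ 2 ≤
        ((S j).card : ℝ) * ∑ i ∈ S j, hellinger (μ ∅) (μ {i}) ^ 2 :=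
      sq_sum_le_card_mul_sum_sq
    have h3 : ((S j).card : ℝ) * ∑ i ∈ S j, hellinger (μ ∅) (μ {i}) ^ 2 ≤
        (k : ℝ) * ∑ i ∈ S j, hellingerSq (μ ∅) (μ {i}) := by
      simp_rw [sq_hellinger]
      refine mul_le_mul_of_nonneg_right ?_ ?_
      · exact_mod_cast hcard j
      · exact Finset.sum_nonneg fun i _ => hellingerSq_nonneg _ _
    linarith
  have total : ∑ j : Fin m, hellingerSq (μ ∅) (μ (S j)) ≤
      (k : ℝ) * ∑ i : Fin α, hellingerSq (μ ∅) (μ {i}) := by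
    calc ∑ j : Fin m, hellingerSq (μ ∅) (μ (S j))
        ≤ ∑ j : Fin m, (k : ℝ) * ∑ i ∈ S j, hellingerSq (μ ∅) (μ {i}) :=
          Finset.sum_le_sum fun j _ => block j
      _ = (k : ℝ) * ∑ j : Fin m, ∑ i ∈ S j, hellingerSq (μ ∅) (μ {i}) := by
          rw [Finset.mul_sum]
      _ = (k : ℝ) * ∑ i ∈ Finset.univ.biUnion S, hellingerSq (μ ∅) (μ {i}) := by
          rw [Finset.sum_biUnion]
          intro a _ b _ hab
          exact hdisj a b hab
      _ ≤ (k : ℝ) * ∑ i : Fin α, hellingerSq (μ ∅) (μ {i}) := by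
          refine mul_le_mul_of_nonneg_left ?_ (by positivity)
          exact Finset.sum_le_sum_of_subset_of_nonneg (Finset.subset_univ _)
            fun i _ _ => hellingerSq_nonneg _ _
  have hkpos : (0:ℝ) < k := by exact_mod_cast hk
  rw [div_mul_eq_mul_div, one_mul, div_le_iff₀ (by positivity)]
  have hnn : 0 ≤ ∑ i : Fin α, hellingerSq (μ ∅) (μ {i}) :=
    Finset.sum_nonneg fun i _ => hellingerSq_nonneg _ _
  nlinarith [total]
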